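/- arXiv:2102.11075 — 3 statements merged into one kernel-verified Lean document; each statement's English description precedes it below -/
import Mathlib

section
/- Let Ω and Θ be nonempty types, let ρ_A be a real-valued functional on bounded real-valued functions on Ω, and let ρ_E be a real-valued functional on bounded real-valued functions on Θ. Define the composite risk functional F on bounded functions Z : Θ × Ω → ℝ by F(Z) = ρ_E(θ ↦ ρ_A(ω ↦ Z(θ, ω))). If ρ_A and ρ_E are both coherent risk measures, then F is a coherent risk measure on bounded functions Θ × Ω → ℝ; that is, F is normalized (F(0) = 0), monotone (Z₁ ≤ Z₂ pointwise implies F(Z₁) ≤ F(Z₂)), subadditive (F(Z₁ + Z₂) ≤ F(Z₁) + F(Z₂)), positively homogeneous (F(c • Z) = c · F(Z) for c ≥ 0), and translation invariant (F(Z + c·1) = F(Z) + c for every real c). -/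
/-- A real-valued function is bounded. -/
def IsBddFun {X : Type*} (f : X → ℝ) : Prop := ∃ C : ℝ, ∀ x, |f x| ≤ C

/-- A coherent risk measure on bounded real-valued functions on `X`:
normalized, monotone, subadditive, positively homogeneous and translation
invariant. -/
def IsCoherentRiskMeasure {X : Type*} (ρ : (X → ℝ) → ℝ) : Prop :=
  ρ 0 = 0 ∧
  (∀ f g : X → ℝ, IsBddFun f → IsBddFun g → (∀ x, f x ≤ g x) → ρ f ≤ ρ g) ∧
  (∀ f g : X → ℝ, IsBddFun f → IsBddFun g → ρ (f + g) ≤ ρ f + ρ g) ∧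
  (∀ (c : ℝ) (f : X → ℝ), 0 ≤ c → IsBddFun f → ρ (c • f) = c * ρ f) ∧
  (∀ (c : ℝ) (f : X → ℝ), IsBddFun f → ρ (f + fun _ => c) = ρ f + c)

lemma bdd_const {X : Type*} (c : ℝ) : IsBddFun (fun _ : X => c) :=
  ⟨|c|, fun _ => le_refl _⟩

lemma bdd_zero {X : Type*} : IsBddFun (0 : X → ℝ) := ⟨0, fun _ => by simp⟩

lemma coherent_bound {X : Type*} {ρ : (X → ℝ) → ℝ} (h : IsCoherentRiskMeasure ρ)
    {f : X → ℝ} {C : ℝ} (hC : ∀ x, |f x| ≤ C) : |ρ f| ≤ C := by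
  obtain ⟨hnorm, hmono, hsub, hhom, htrans⟩ := h
  have hbf : IsBddFun f := ⟨C, hC⟩
  have h1 : ρ f ≤ C := by
    have := hmono f (fun _ => C) hbf (bdd_const C) (fun x => (abs_le.1 (hC x)).2)
    have hc : ρ (fun _ : X => C) = C := by
      have := htrans C 0 bdd_zero
      simpa [hnorm] using this
    linarith
  have h2 : -C ≤ ρ f := by
    have := hmono (fun _ => -C) f (bdd_const _) hbf (fun x => (abs_le.1 (hC x)).1)
    have hc : ρ (fun _ : X => -C) = -C := by
      have := htrans (-C) 0 bdd_zero
      simpa [hnorm] using this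
    linarith
  exact abs_le.2 ⟨h2, h1⟩

lemma inner_bdd {Ω Θ : Type*} {ρA : (Ω → ℝ) → ℝ} (hA : IsCoherentRiskMeasure ρA)
    {Z : Θ × Ω → ℝ} (hZ : IsBddFun Z) :
    IsBddFun (fun θ => ρA (fun ω => Z (θ, ω))) := by
  obtain ⟨C, hC⟩ := hZ
  exact ⟨C, fun θ => coherent_bound hA (fun ω => hC (θ, ω))⟩

lemma slice_bdd {Ω Θ : Type*} {Z : Θ × Ω → ℝ} (hZ : IsBddFun Z) (θ : Θ) :
    IsBddFun (fun ω => Z (θ, ω)) := by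
  obtain ⟨C, hC⟩ := hZ
  exact ⟨C, fun ω => hC (θ, ω)⟩

/-- Coherence Lemma: the composite risk
`F(Z) = ρ_E (θ ↦ ρ_A (ω ↦ Z (θ, ω)))` of two coherent risk measures is itself
a coherent risk measure. -/
theorem composite_risk_coherent {Ω Θ : Type*} [Nonempty Ω] [Nonempty Θ]
    (ρA : (Ω → ℝ) → ℝ) (ρE : (Θ → ℝ) → ℝ)
    (hA : IsCoherentRiskMeasure ρA) (hE : IsCoherentRiskMeasure ρE) :
    IsCoherentRiskMeasure
      (fun Z : Θ × Ω → ℝ => ρE (fun θ => ρA (fun ω => Z (θ, ω)))) := by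
  obtain ⟨hAn, hAm, hAs, hAh, hAt⟩ := hA
  obtain ⟨hEn, hEm, hEs, hEh, hEt⟩ := hE
  have hA' : IsCoherentRiskMeasure ρA := ⟨hAn, hAm, hAs, hAh, hAt⟩
  refine ⟨?_, ?_, ?_, ?_, ?_⟩
  · show (ρE fun θ => ρA fun ω => (0 : Θ × Ω → ℝ) (θ, ω)) = 0
    rw [show (fun θ : Θ => ρA fun ω : Ω => (0 : Θ × Ω → ℝ) (θ, ω)) = 0 from
      funext fun θ => hAn]
    exact hEn
  · intro Z₁ Z₂ h₁ h₂ hle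
    exact hEm _ _ (inner_bdd hA' h₁) (inner_bdd hA' h₂)
      (fun θ => hAm _ _ (slice_bdd h₁ θ) (slice_bdd h₂ θ) (fun ω => hle (θ, ω)))
  · intro Z₁ Z₂ h₁ h₂
    calc ρE (fun θ => ρA (fun ω => (Z₁ + Z₂) (θ, ω)))
        ≤ ρE ((fun θ => ρA (fun ω => Z₁ (θ, ω))) + fun θ => ρA (fun ω => Z₂ (θ, ω))) := by
          apply hEm _ _ ?_ ?_
          · intro θ
            exact hAs _ _ (slice_bdd h₁ θ) (slice_bdd h₂ θ)
          · obtain ⟨C, hC⟩ := h₁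
            obtain ⟨D, hD⟩ := h₂
            exact ⟨C + D, fun θ =>
              coherent_bound hA' (fun ω => (abs_add_le _ _).trans
                (add_le_add (hC (θ, ω)) (hD (θ, ω))))⟩
          · obtain ⟨C₁, hC₁⟩ := inner_bdd hA' h₁
            obtain ⟨C₂, hC₂⟩ := inner_bdd hA' h₂
            exact ⟨C₁ + C₂, fun θ => (abs_add_le _ _).trans (add_le_add (hC₁ θ) (hC₂ θ))⟩
      _ ≤ _ := hEs _ _ (inner_bdd hA' h₁) (inner_bdd hA' h₂)
  · intro c Z hc hZ
    have key : (fun θ => ρA (fun ω => (c • Z) (θ, ω)))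
        = c • fun θ => ρA (fun ω => Z (θ, ω)) := by
      funext θ
      simpa [Pi.smul_apply, Pi.smul_def, smul_eq_mul] using hAh c (fun ω => Z (θ, ω)) hc (slice_bdd hZ θ)
    show ρE (fun θ => ρA fun ω => (c • Z) (θ, ω)) = c * ρE (fun θ => ρA fun ω => Z (θ, ω))
    rw [key, hEh c _ hc (inner_bdd hA' hZ)]
  · intro c Z hZ
    have key : (fun θ => ρA (fun ω => (Z + fun _ => c : Θ × Ω → ℝ) (θ, ω)))
        = (fun θ => ρA (fun ω => Z (θ, ω))) + fun _ => c := by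
      funext θ
      simpa [Pi.add_def] using hAt c (fun ω => Z (θ, ω)) (slice_bdd hZ θ)
    show ρE (fun θ => ρA fun ω => (Z + fun _ => c : Θ × Ω → ℝ) (θ, ω))
        = ρE (fun θ => ρA fun ω => Z (θ, ω)) + c
    rw [key, hEt c _ (inner_bdd hA' hZ)]
end

section
/- Let α ∈ (0, 1], let (Θ, 𝒜, β) be a probability space, and let θ ↦ P_θ be a measurable family of probability measures on ℝ such that each P_θ has finite first moment, the mixture measure P := ∫_Θ P_θ dβ(θ) (the bind of β with the kernel θ ↦ P_θ) has finite first moment, and θ ↦ CVaR_α(P_θ) is β-integrable, where CVaR_α(μ) := sup_{c ∈ ℝ} ( c − α⁻¹ ∫_ℝ max(c − z, 0) dμ(z) ). Then the CVaR of the marginal distribution is at most the β-average of the per-model CVaRs: CVaR_α(P) ≤ ∫_Θ CVaR_α(P_θ) dβ(θ). -/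
open MeasureTheory

/-- The (left-tail) Conditional Value at Risk at level `α`, via the
Rockafellar–Uryasev formula. -/
noncomputable def CVaR (α : ℝ) (μ : Measure ℝ) : ℝ :=
  ⨆ c : ℝ, (c - α⁻¹ * ∫ z, max (c - z) 0 ∂μ)

section aux

variable {α : ℝ}

lemma max_meas (c : ℝ) : Measurable (fun z : ℝ => max (c - z) 0) :=
  (measurable_const.sub measurable_id).max measurable_const

lemma max_integrable (c : ℝ) (μ : Measure ℝ) [IsProbabilityMeasure μ]
    (h : Integrable (fun z : ℝ => z) μ) :
    Integrable (fun z : ℝ => max (c - z) 0) μ := by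
  have : Integrable (fun z : ℝ => c - z) μ := (integrable_const c).sub h
  exact this.pos_part

/-- Upper bound on the RU objective: each term is at most `∫ z dμ`. -/
lemma ru_term_le (hα : α ∈ Set.Ioc (0 : ℝ) 1) (μ : Measure ℝ) [IsProbabilityMeasure μ]
    (h : Integrable (fun z : ℝ => z) μ) (c : ℝ) :
    c - α⁻¹ * ∫ z, max (c - z) 0 ∂μ ≤ ∫ z, z ∂μ := by
  obtain ⟨hα0, hα1⟩ := hα
  have hnn : 0 ≤ ∫ z, max (c - z) 0 ∂μ :=
    integral_nonneg fun z => le_max_right _ _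
  have h1 : (1 : ℝ) ≤ α⁻¹ := by
    rw [le_inv_comm₀ one_pos hα0]; simpa using hα1
  have h2 : ∫ z, max (c - z) 0 ∂μ ≤ α⁻¹ * ∫ z, max (c - z) 0 ∂μ :=
    le_mul_of_one_le_left hnn h1
  have h3 : c - ∫ z, z ∂μ ≤ ∫ z, max (c - z) 0 ∂μ := by
    have : ∫ z, (c - z) ∂μ ≤ ∫ z, max (c - z) 0 ∂μ :=
      integral_mono ((integrable_const c).sub h) (max_integrable c μ h)
        fun z => le_max_left _ _
    rwa [integral_sub (integrable_const c) h, integral_const, probReal_univ,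
      smul_eq_mul, one_mul] at this
  linarith

lemma cvar_bddAbove (hα : α ∈ Set.Ioc (0 : ℝ) 1) (μ : Measure ℝ) [IsProbabilityMeasure μ]
    (h : Integrable (fun z : ℝ => z) μ) :
    BddAbove (Set.range fun c : ℝ => c - α⁻¹ * ∫ z, max (c - z) 0 ∂μ) :=
  ⟨∫ z, z ∂μ, by rintro _ ⟨c, rfl⟩; exact ru_term_le hα μ h c⟩

lemma le_cvar (hα : α ∈ Set.Ioc (0 : ℝ) 1) (μ : Measure ℝ) [IsProbabilityMeasure μ]
    (h : Integrable (fun z : ℝ => z) μ) (c : ℝ) :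
    c - α⁻¹ * ∫ z, max (c - z) 0 ∂μ ≤ CVaR α μ :=
  le_ciSup (cvar_bddAbove hα μ h) c

end aux

/-- The CVaR of the marginal (mixture) distribution `P = ∫ P_θ dβ(θ)` is
at most the β-average of the per-model CVaRs: the additive CVaR estimate
underestimates the total CVaR risk. -/
theorem cvar_marginal_le_avg_cvar
    {Θ : Type*} [MeasurableSpace Θ]
    (β : Measure Θ) [IsProbabilityMeasure β]
    (P : Θ → Measure ℝ) (hP : Measurable P) [∀ θ, IsProbabilityMeasure (P θ)]
    (α : ℝ) (hα : α ∈ Set.Ioc (0 : ℝ) 1)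
    (hint : ∀ θ, Integrable (fun z : ℝ => z) (P θ))
    (hmix : Integrable (fun z : ℝ => z) (β.bind P))
    (hcvar : Integrable (fun θ => CVaR α (P θ)) β) :
    CVaR α (β.bind P) ≤ ∫ θ, CVaR α (P θ) ∂β := by
  haveI : IsProbabilityMeasure (β.bind P) := by
    constructor
    rw [Measure.bind_apply MeasurableSet.univ hP.aemeasurable]
    simp
  refine ciSup_le fun c => ?_
  set f : ℝ → ℝ := fun z => max (c - z) 0 with hf
  have hfm : Measurable f := max_meas c
  have hfnn : ∀ z, 0 ≤ f z := fun z => le_max_right _ _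
  have hbind : ∫⁻ z, ENNReal.ofReal (f z) ∂(β.bind P)
      = ∫⁻ θ, ∫⁻ z, ENNReal.ofReal (f z) ∂(P θ) ∂β :=
    Measure.lintegral_bind hP.aemeasurable (ENNReal.measurable_ofReal.comp hfm).aemeasurable
  have hfint : Integrable f (β.bind P) := max_integrable c _ hmix
  have hfintθ : ∀ θ, Integrable f (P θ) := fun θ => max_integrable c _ (hint θ)
  set G : Θ → ENNReal := fun θ => ∫⁻ z, ENNReal.ofReal (f z) ∂(P θ) with hG
  have hGm : Measurable G :=
    (Measure.measurable_lintegral (ENNReal.measurable_ofReal.comp hfm)).comp hP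
  have htop : ∫⁻ θ, G θ ∂β ≠ ⊤ := by
    rw [← hbind]; exact hfint.lintegral_lt_top.ne
  -- pointwise: real integral of f over P θ equals (G θ).toReal
  have hgθ : ∀ θ, ∫ z, f z ∂(P θ) = (G θ).toReal := fun θ =>
    integral_eq_lintegral_of_nonneg_ae (Filter.Eventually.of_forall hfnn)
      hfm.aestronglyMeasurable
  -- real integral of f over the mixture equals ∫θ (G θ).toReal dβ
  have hmain : ∫ z, f z ∂(β.bind P) = ∫ θ, (G θ).toReal ∂β := by
    rw [integral_eq_lintegral_of_nonneg_ae (Filter.Eventually.of_forall hfnn)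
      hfm.aestronglyMeasurable, hbind]
    exact (integral_toReal hGm.aemeasurable (ae_lt_top hGm htop)).symm
  have hGint : Integrable (fun θ => (G θ).toReal) β :=
    integrable_toReal_of_lintegral_ne_top hGm.aemeasurable htop
  have hsplit : c - α⁻¹ * ∫ z, f z ∂(β.bind P)
      = ∫ θ, (c - α⁻¹ * (G θ).toReal) ∂β := by
    rw [hmain, integral_sub (integrable_const c) (hGint.const_mul α⁻¹),
      integral_const, probReal_univ, smul_eq_mul, one_mul,
      integral_const_mul]
  rw [hsplit]
  refine integral_mono ((integrable_const c).sub (hGint.const_mul α⁻¹)) hcvar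
    fun θ => ?_
  have := le_cvar hα (P θ) (hint θ) c
  rwa [hgθ θ] at this
end

section
/- Let α ∈ (0, 1), p ∈ (0, 1), σ > 0, and let μ₁ ≠ μ₂ be real numbers. Let N(μ_i, σ²) denote the Gaussian probability measure on ℝ with mean μ_i and variance σ², and define CVaR_α(μ) := sup_{c ∈ ℝ} ( c − α⁻¹ ∫_ℝ max(c − z, 0) dμ(z) ). Then the CVaR of the two-component Gaussian mixture is strictly smaller than the mixture of the CVaRs: CVaR_α(p·N(μ₁, σ²) + (1 − p)·N(μ₂, σ²)) < p·CVaR_α(N(μ₁, σ²)) + (1 − p)·CVaR_α(N(μ₂, σ²)). -/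
open MeasureTheory ProbabilityTheory

open Real Set
open scoped NNReal ENNReal

lemma integrable_id_gaussianReal' (μ : ℝ) (v : ℝ≥0) :
    Integrable (fun x : ℝ => x) (gaussianReal μ v) := by
  by_cases hv : v = 0
  · subst hv; simp only [gaussianReal_zero_var]
    refine ⟨measurable_id.aestronglyMeasurable, ?_⟩
    simp [HasFiniteIntegral, lintegral_dirac]
  · rw [gaussianReal_of_var_ne_zero μ hv,
      integrable_withDensity_iff (measurable_gaussianPDF μ v)
        (Filter.Eventually.of_forall fun x => ENNReal.ofReal_lt_top)]
    have h0 : (fun x : ℝ => x * (gaussianPDF μ v x).toReal)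
        = fun x => x * gaussianPDFReal μ v x := by
      funext x
      rw [gaussianPDF_def, ENNReal.toReal_ofReal (gaussianPDFReal_nonneg _ _ _)]
    rw [h0]
    have hb : (0:ℝ) < (2 * (v:ℝ))⁻¹ := by
      have : (0:ℝ) < (v:ℝ) := lt_of_le_of_ne (v.coe_nonneg) (by exact_mod_cast (Ne.symm hv))
      positivity
    have hg : Integrable (fun y : ℝ => (y + μ) * gaussianPDFReal 0 v y) := by
      have h1 : (fun y : ℝ => (y + μ) * gaussianPDFReal 0 v y)
          = fun y => (√(2 * π * v))⁻¹ * (y * rexp (-(2*(v:ℝ))⁻¹ * y^2))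
              + (μ * (√(2 * π * v))⁻¹) * rexp (-(2*(v:ℝ))⁻¹ * y^2) := by
        funext y
        have : -(y - 0)^2 / (2*(v:ℝ)) = -(2*(v:ℝ))⁻¹ * y^2 := by
          field_simp
          ring
        rw [gaussianPDFReal, this]; ring
      rw [h1]
      exact (((integrable_mul_exp_neg_mul_sq hb).const_mul _).add
        ((integrable_exp_neg_mul_sq hb).const_mul _))
    have := hg.comp_sub_right μ
    simpa [gaussianPDFReal_sub, sub_add_cancel] using this

lemma gaussianReal_pos_Ioo {v : ℝ≥0} (hv : v ≠ 0) {a b : ℝ} (hab : a < b) :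
    0 < gaussianReal 0 v (Set.Ioo a b) := by
  rw [pos_iff_ne_zero]
  intro h
  have h2 := (gaussianReal_absolutelyContinuous' 0 hv) h
  rw [Real.volume_Ioo] at h2
  rw [ENNReal.ofReal_eq_zero] at h2
  linarith

lemma gaussian_translate {v : ℝ≥0} (μc c : ℝ) :
    ∫ z, max (c - z) 0 ∂(gaussianReal μc v)
      = ∫ z, max ((c - μc) - z) 0 ∂(gaussianReal 0 v) := by
  have hmap : (gaussianReal 0 v).map (· + μc) = gaussianReal μc v := by
    rw [gaussianReal_map_add_const, zero_add]
  rw [← hmap, integral_map (f := fun z => max (c - z) 0) (measurable_add_const μc).aemeasurable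
    ((continuous_const.sub continuous_id').max continuous_const).aestronglyMeasurable]
  congr 1
  funext z
  congr 1
  ring

variable {ν : Measure ℝ} [IsProbabilityMeasure ν]

private lemma aux_integrable (hid : Integrable (fun z : ℝ => z) ν) (c : ℝ) :
    Integrable (fun z => max (c - z) 0) ν :=
  ((integrable_const c).sub hid).pos_part

private lemma aux_nonneg (c : ℝ) : 0 ≤ ∫ z, max (c - z) 0 ∂ν :=
  integral_nonneg fun z => le_max_right _ _

private lemma aux_ge (hid : Integrable (fun z : ℝ => z) ν) (c : ℝ) :
    c - ∫ z, z ∂ν ≤ ∫ z, max (c - z) 0 ∂ν := by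
  have h : ∫ z, (c - z) ∂ν ≤ ∫ z, max (c - z) 0 ∂ν :=
    integral_mono ((integrable_const c).sub hid) (aux_integrable hid c) fun z => le_max_left _ _
  rwa [integral_sub (integrable_const c) hid, integral_const, probReal_univ,
    one_smul] at h

private lemma aux_lip (hid : Integrable (fun z : ℝ => z) ν) :
    LipschitzWith 1 (fun c : ℝ => ∫ z, max (c - z) 0 ∂ν) := by
  have key : ∀ c d : ℝ, (∫ z, max (c - z) 0 ∂ν) ≤ (∫ z, max (d - z) 0 ∂ν) + |c - d| := by
    intro c d
    have h : ∫ z, max (c - z) 0 ∂ν ≤ ∫ z, (max (d - z) 0 + |c - d|) ∂ν := by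
      refine integral_mono (aux_integrable hid c)
        ((aux_integrable hid d).add (integrable_const _)) fun z => ?_
      rcases le_total (c - z) 0 with h0 | h0
      · simp only [max_eq_right h0]
        exact add_nonneg (le_max_right _ _) (abs_nonneg _)
      · have h1 : c - z ≤ (d - z) + |c - d| := by
          have := le_abs_self (c - d); linarith
        exact max_le (h1.trans (add_le_add_left (le_max_left _ _) _))
          (add_nonneg (le_max_right _ _) (abs_nonneg _))
    rwa [integral_add (aux_integrable hid d) (integrable_const _), integral_const,
      probReal_univ, one_smul] at h
  refine LipschitzWith.of_dist_le_mul fun c d => ?_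
  rw [Real.dist_eq, Real.dist_eq, NNReal.coe_one, one_mul]
  rw [abs_sub_le_iff]
  constructor
  · linarith [key c d, le_abs_self (c - d)]
  · linarith [key d c, abs_sub_comm c d, le_abs_self (d - c)]

private lemma aux_strict_conv (hid : Integrable (fun z : ℝ => z) ν)
    (hpos : ∀ a b : ℝ, a < b → 0 < ν (Set.Ioo a b))
    {a b q : ℝ} (hab : a < b) (hq : q ∈ Set.Ioo (0:ℝ) 1) :
    (∫ z, max (q * a + (1 - q) * b - z) 0 ∂ν) <
      q * (∫ z, max (a - z) 0 ∂ν) + (1 - q) * (∫ z, max (b - z) 0 ∂ν) := by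
  obtain ⟨hq0, hq1⟩ := hq
  set m : ℝ := q * a + (1 - q) * b with hm
  have ham : a < m := by nlinarith
  have hmb : m < b := by nlinarith
  have hInt1 : Integrable (fun z => q * max (a - z) 0 + (1 - q) * max (b - z) 0) ν :=
    ((aux_integrable hid a).const_mul q).add ((aux_integrable hid b).const_mul (1 - q))
  have hDint : Integrable
      (fun z => q * max (a - z) 0 + (1 - q) * max (b - z) 0 - max (m - z) 0) ν :=
    hInt1.sub (aux_integrable hid m)
  have hD0 : (0 : ℝ → ℝ) ≤
      fun z => q * max (a - z) 0 + (1 - q) * max (b - z) 0 - max (m - z) 0 := by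
    intro z
    simp only [Pi.zero_apply, sub_nonneg]
    refine max_le ?_ (add_nonneg (mul_nonneg hq0.le (le_max_right _ _))
      (mul_nonneg (by linarith) (le_max_right _ _)))
    have h1 : m - z = q * (a - z) + (1 - q) * (b - z) := by ring
    rw [h1]
    exact add_le_add (mul_le_mul_of_nonneg_left (le_max_left _ _) hq0.le)
      (mul_le_mul_of_nonneg_left (le_max_left _ _) (by linarith))
  have hsupp : Set.Ioo a m ⊆ Function.support
      (fun z => q * max (a - z) 0 + (1 - q) * max (b - z) 0 - max (m - z) 0) := by
    intro z hz
    have h1 : max (a - z) 0 = 0 := max_eq_right (by linarith [hz.1])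
    have h2 : max (b - z) 0 = b - z := max_eq_left (by linarith [hz.2, hmb])
    have h3 : max (m - z) 0 = m - z := max_eq_left (by linarith [hz.2])
    have hgt : 0 < q * max (a - z) 0 + (1 - q) * max (b - z) 0 - max (m - z) 0 := by
      rw [h1, h2, h3]
      nlinarith [hz.1, hz.2]
    exact Function.mem_support.2 (ne_of_gt hgt)
  have hDpos : 0 < ∫ z, (q * max (a - z) 0 + (1 - q) * max (b - z) 0 - max (m - z) 0) ∂ν := by
    rw [integral_pos_iff_support_of_nonneg hD0 hDint]
    exact lt_of_lt_of_le (hpos a m ham) (measure_mono hsupp)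
  rw [integral_sub hInt1 (aux_integrable hid m),
    integral_add ((aux_integrable hid a).const_mul q)
      ((aux_integrable hid b).const_mul (1 - q)),
    integral_const_mul, integral_const_mul] at hDpos
  linarith
private lemma core (hid : Integrable (fun z : ℝ => z) ν)
    (hpos : ∀ a b : ℝ, a < b → 0 < ν (Set.Ioo a b))
    (hlip : LipschitzWith 1 (fun c : ℝ => ∫ z, max (c - z) 0 ∂ν))
    (hconv : ∀ {a b q : ℝ}, a < b → q ∈ Set.Ioo (0:ℝ) 1 →
      (∫ z, max (q * a + (1 - q) * b - z) 0 ∂ν) <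
        q * (∫ z, max (a - z) 0 ∂ν) + (1 - q) * (∫ z, max (b - z) 0 ∂ν))
    (α : ℝ) (hα : α ∈ Set.Ioo (0 : ℝ) 1)
    (p : ℝ) (hp : p ∈ Set.Ioo (0 : ℝ) 1)
    (μ₁ μ₂ : ℝ) (hne : μ₁ ≠ μ₂) :
    (⨆ c : ℝ, (c - α⁻¹ * (p * (∫ z, max ((c - μ₁) - z) 0 ∂ν)
        + (1 - p) * (∫ z, max ((c - μ₂) - z) 0 ∂ν)))) <
      p * (⨆ c : ℝ, (c - α⁻¹ * ∫ z, max ((c - μ₁) - z) 0 ∂ν)) +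
        (1 - p) * (⨆ c : ℝ, (c - α⁻¹ * ∫ z, max ((c - μ₂) - z) 0 ∂ν)) := by
  obtain ⟨hα0, hα1⟩ := hα
  obtain ⟨hp0, hp1⟩ := hp
  have hαinv : 1 < α⁻¹ := by
    rw [lt_inv_comm₀ one_pos hα0]; simpa using hα1
  have hαpos : (0:ℝ) < α⁻¹ := by linarith
  set m : ℝ := ∫ z, z ∂ν with hm
  -- upper bound for the base function
  have hB : ∀ x : ℝ, x - α⁻¹ * ∫ z, max (x - z) 0 ∂ν ≤ m := by
    intro x
    rcases le_total x m with h | h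
    · nlinarith [aux_nonneg (ν := ν) x]
    · nlinarith [aux_ge hid x]
  have hBdd : BddAbove (Set.range fun x : ℝ => x - α⁻¹ * ∫ z, max (x - z) 0 ∂ν) :=
    ⟨m, by rintro _ ⟨x, rfl⟩; exact hB x⟩
  set S : ℝ := ⨆ x : ℝ, (x - α⁻¹ * ∫ z, max (x - z) 0 ∂ν) with hS
  have hSx : ∀ x : ℝ, x - α⁻¹ * ∫ z, max (x - z) 0 ∂ν ≤ S := fun x => le_ciSup hBdd x
  -- lower bound for the translated suprema
  have hsup_ge : ∀ μc : ℝ, μc + S ≤ ⨆ c : ℝ, (c - α⁻¹ * ∫ z, max ((c - μc) - z) 0 ∂ν) := by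
    intro μc
    have hbdd2 : BddAbove (Set.range fun c : ℝ =>
        c - α⁻¹ * ∫ z, max ((c - μc) - z) 0 ∂ν) := by
      refine ⟨m + μc, ?_⟩
      rintro _ ⟨c, rfl⟩
      have := hB (c - μc)
      linarith
    have hle : S ≤ (⨆ c : ℝ, (c - α⁻¹ * ∫ z, max ((c - μc) - z) 0 ∂ν)) - μc := by
      rw [hS]
      refine ciSup_le fun x => ?_
      have h := le_ciSup hbdd2 (x + μc)
      rw [add_sub_cancel_right] at h
      linarith
    linarith
  -- the mixture objective F
  set F : ℝ → ℝ := fun c => c - α⁻¹ * (p * (∫ z, max ((c - μ₁) - z) 0 ∂ν)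
      + (1 - p) * (∫ z, max ((c - μ₂) - z) 0 ∂ν)) with hF
  set T : ℝ := p * μ₁ + (1 - p) * μ₂ + S with hT
  -- pointwise strict bound
  have hFlt : ∀ c : ℝ, F c < T := by
    intro c
    have hkey : (∫ z, max ((c - (p * μ₁ + (1 - p) * μ₂)) - z) 0 ∂ν) <
        p * (∫ z, max ((c - μ₁) - z) 0 ∂ν) + (1 - p) * (∫ z, max ((c - μ₂) - z) 0 ∂ν) := by
      rcases hne.lt_or_gt with h | h
      · have h2 := hconv (a := c - μ₂) (b := c - μ₁) (q := 1 - p)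
          (by linarith) ⟨by linarith, by linarith⟩
        have hxx : (1 - p) * (c - μ₂) + (1 - (1 - p)) * (c - μ₁)
            = c - (p * μ₁ + (1 - p) * μ₂) := by ring
        rw [hxx] at h2
        have hq : (1 : ℝ) - (1 - p) = p := by ring
        rw [hq] at h2
        linarith
      · have h2 := hconv (a := c - μ₁) (b := c - μ₂) (q := p)
          (by linarith) ⟨hp0, hp1⟩
        have hxx : p * (c - μ₁) + (1 - p) * (c - μ₂)
            = c - (p * μ₁ + (1 - p) * μ₂) := by ring
        rw [hxx] at h2
        exact h2
    have hSb := hSx (c - (p * μ₁ + (1 - p) * μ₂))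
    have hmul := mul_lt_mul_of_pos_left hkey hαpos
    simp only [hF, hT]
    linarith
  -- tail bounds
  have hF1 : ∀ c : ℝ, F c ≤ c := by
    intro c
    have h1 := aux_nonneg (ν := ν) (c - μ₁)
    have h2 := aux_nonneg (ν := ν) (c - μ₂)
    have : 0 ≤ α⁻¹ * (p * (∫ z, max ((c - μ₁) - z) 0 ∂ν)
        + (1 - p) * (∫ z, max ((c - μ₂) - z) 0 ∂ν)) := by
      apply mul_nonneg hαpos.le
      have := mul_nonneg hp0.le h1
      have := mul_nonneg (by linarith : (0:ℝ) ≤ 1 - p) h2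
      linarith
    simp only [hF]
    linarith
  have hF2 : ∀ c : ℝ, F c ≤ (1 - α⁻¹) * c + α⁻¹ * (m + (p * μ₁ + (1 - p) * μ₂)) := by
    intro c
    have h1 := aux_ge hid (c - μ₁)
    have h2 := aux_ge hid (c - μ₂)
    rw [← hm] at h1 h2
    have hsum : c - (p * μ₁ + (1 - p) * μ₂) - m ≤
        p * (∫ z, max ((c - μ₁) - z) 0 ∂ν) + (1 - p) * (∫ z, max ((c - μ₂) - z) 0 ∂ν) := by
      nlinarith [mul_le_mul_of_nonneg_left h1 hp0.le,
        mul_le_mul_of_nonneg_left h2 (by linarith : (0:ℝ) ≤ 1 - p)]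
    have := mul_le_mul_of_nonneg_left hsum hαpos.le
    simp only [hF]
    nlinarith
  -- compactness argument
  have hIcont : Continuous (fun c : ℝ => ∫ z, max (c - z) 0 ∂ν) := hlip.continuous
  have hFcont : Continuous F := by
    have h1 : Continuous fun c : ℝ => ∫ z, max ((c - μ₁) - z) 0 ∂ν :=
      hIcont.comp (continuous_sub_right μ₁)
    have h2 : Continuous fun c : ℝ => ∫ z, max ((c - μ₂) - z) 0 ∂ν :=
      hIcont.comp (continuous_sub_right μ₂)
    rw [hF]
    exact continuous_id.sub (continuous_const.mul
      ((continuous_const.mul h1).add (continuous_const.mul h2)))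
  have hne1 : (1 : ℝ) - α⁻¹ < 0 := by linarith
  set A : ℝ := T - 1 with hA
  set B : ℝ := (T - 1 - α⁻¹ * (m + (p * μ₁ + (1 - p) * μ₂))) / (1 - α⁻¹) with hB'
  have hBval : (1 - α⁻¹) * B = T - 1 - α⁻¹ * (m + (p * μ₁ + (1 - p) * μ₂)) := by
    rw [hB', mul_comm, div_mul_cancel₀ _ (ne_of_lt hne1)]
  obtain ⟨c₀, hc₀K, hc₀max⟩ :=
    isCompact_Icc.exists_isMaxOn (s := Icc (min A B) (max A B))
      (Set.nonempty_Icc.mpr (min_le_max)) hFcont.continuousOn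
  set M : ℝ := max (F c₀) (T - 1) with hM
  have hMT : M < T := max_lt (hFlt c₀) (by linarith)
  have hsup : ∀ c : ℝ, F c ≤ M := by
    intro c
    by_cases hc : c ∈ Icc (min A B) (max A B)
    · exact (hc₀max hc).trans (le_max_left _ _)
    · rw [mem_Icc, not_and_or, not_le, not_le] at hc
      rcases hc with hc | hc
      · have h1 := hF1 c
        have h2 : c ≤ A := le_trans hc.le (min_le_left _ _)
        have : F c ≤ T - 1 := by rw [hA] at h2; linarith
        exact this.trans (le_max_right _ _)
      · have h1 := hF2 c
        have h2 : B ≤ c := le_trans (le_max_right A B) hc.le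
        have h3 : (1 - α⁻¹) * c ≤ (1 - α⁻¹) * B :=
          mul_le_mul_of_nonpos_left h2 hne1.le
        have : F c ≤ T - 1 := by rw [hBval] at h3; clear_value F T A B M m S; linarith
        exact this.trans (le_max_right _ _)
  have hlhs : (⨆ c : ℝ, F c) ≤ M := ciSup_le hsup
  have hrhs : T ≤ p * (⨆ c : ℝ, (c - α⁻¹ * ∫ z, max ((c - μ₁) - z) 0 ∂ν)) +
      (1 - p) * (⨆ c : ℝ, (c - α⁻¹ * ∫ z, max ((c - μ₂) - z) 0 ∂ν)) := by
    have h1 := mul_le_mul_of_nonneg_left (hsup_ge μ₁) hp0.le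
    have h2 := mul_le_mul_of_nonneg_left (hsup_ge μ₂) (by linarith : (0:ℝ) ≤ 1 - p)
    rw [hT]
    nlinarith
  calc (⨆ c : ℝ, F c) ≤ M := hlhs
    _ < T := hMT
    _ ≤ _ := hrhs

/-- For a two-component Gaussian mixture with distinct means, the CVaR of the
mixture is strictly smaller than the mixture of the CVaRs: the additive CVaR
estimate strictly underestimates the total CVaR risk. -/
theorem cvar_gaussian_mixture_lt
    (α : ℝ) (hα : α ∈ Set.Ioo (0 : ℝ) 1)
    (p : ℝ) (hp : p ∈ Set.Ioo (0 : ℝ) 1)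
    (σ : ℝ) (hσ : 0 < σ)
    (μ₁ μ₂ : ℝ) (hne : μ₁ ≠ μ₂) :
    CVaR α (ENNReal.ofReal p • gaussianReal μ₁ ⟨σ ^ 2, sq_nonneg σ⟩ +
        ENNReal.ofReal (1 - p) • gaussianReal μ₂ ⟨σ ^ 2, sq_nonneg σ⟩) <
      p * CVaR α (gaussianReal μ₁ ⟨σ ^ 2, sq_nonneg σ⟩) +
        (1 - p) * CVaR α (gaussianReal μ₂ ⟨σ ^ 2, sq_nonneg σ⟩) := by
  set v : ℝ≥0 := (⟨σ ^ 2, sq_nonneg σ⟩ : ℝ≥0) with hvdef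
  have hv : v ≠ 0 := by
    intro h
    have h2 := congrArg NNReal.toReal h
    rw [hvdef] at h2
    simp only [NNReal.coe_mk, NNReal.coe_zero] at h2
    change σ ^ 2 = 0 at h2
    nlinarith [pow_pos hσ 2]
  have hid := integrable_id_gaussianReal' 0 v
  have hpos : ∀ a b : ℝ, a < b → 0 < (gaussianReal 0 v) (Set.Ioo a b) :=
    fun a b hab => gaussianReal_pos_Ioo hv hab
  have e₁ : CVaR α (gaussianReal μ₁ v)
      = ⨆ c : ℝ, (c - α⁻¹ * ∫ z, max ((c - μ₁) - z) 0 ∂(gaussianReal 0 v)) := by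
    unfold CVaR
    congr 1
    funext c
    rw [gaussian_translate]
  have e₂ : CVaR α (gaussianReal μ₂ v)
      = ⨆ c : ℝ, (c - α⁻¹ * ∫ z, max ((c - μ₂) - z) 0 ∂(gaussianReal 0 v)) := by
    unfold CVaR
    congr 1
    funext c
    rw [gaussian_translate]
  have hmix : CVaR α (ENNReal.ofReal p • gaussianReal μ₁ v
        + ENNReal.ofReal (1 - p) • gaussianReal μ₂ v)
      = ⨆ c : ℝ, (c - α⁻¹ * (p * (∫ z, max ((c - μ₁) - z) 0 ∂(gaussianReal 0 v))
          + (1 - p) * (∫ z, max ((c - μ₂) - z) 0 ∂(gaussianReal 0 v)))) := by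
    unfold CVaR
    congr 1
    funext c
    rw [integral_add_measure
        ((aux_integrable (integrable_id_gaussianReal' μ₁ v) c).smul_measure
          ENNReal.ofReal_ne_top)
        ((aux_integrable (integrable_id_gaussianReal' μ₂ v) c).smul_measure
          ENNReal.ofReal_ne_top),
      integral_smul_measure, integral_smul_measure,
      ENNReal.toReal_ofReal hp.1.le,
      ENNReal.toReal_ofReal (by linarith [hp.2] : (0:ℝ) ≤ 1 - p),
      gaussian_translate μ₁ c, gaussian_translate μ₂ c, smul_eq_mul, smul_eq_mul]
  rw [hmix, e₁, e₂]
  exact core hid hpos (aux_lip hid)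
    (fun {a b q} hab hq => aux_strict_conv hid hpos hab hq) α hα p hp μ₁ μ₂ hne
end
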